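/- Let (U, Z, X) have joint law Q with U ⊥ Z | X under Q, and let Q' be a probability measure with Q' ≪ Q whose density factorizes as dQ'/dQ = ψ₁(U,X)·ψ₂(Z,X)/c for bounded measurable functions ψ₁, ψ₂ > 0 and a normalizing constant c > 0. Then U is conditionally independent of Z given X under Q'. -/

import Mathlib

open MeasureTheory
open scoped ENNReal NNReal

section Aux

variable {Ω : Type*} {m m0 : MeasurableSpace Ω} {μ : Measure Ω}

lemma integrable_of_ae_bdd [IsFiniteMeasure μ] {g : Ω → ℝ}
    (hg : AEStronglyMeasurable g μ) {C : ℝ} (hb : ∀ᵐ ω ∂μ, |g ω| ≤ C) :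
    Integrable g μ :=
  ⟨hg, HasFiniteIntegral.of_bounded (C := C) (by simpa [Real.norm_eq_abs] using hb)⟩

lemma condexp_pos_of_pos (hm : m ≤ m0) {μ : Measure Ω} [IsFiniteMeasure μ]
    {g : Ω → ℝ} (hg : Integrable g μ) (hgpos : ∀ ω, 0 < g ω) :
    ∀ᵐ ω ∂μ, 0 < (μ[g|m]) ω := by
  set s : Set Ω := {ω | (μ[g|m]) ω ≤ 0} with hs_def
  have hsm : MeasurableSet[m] s :=
    stronglyMeasurable_condExp.measurable (measurableSet_Iic : MeasurableSet (Set.Iic (0:ℝ)))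
  have hs0 : MeasurableSet s := hm _ hsm
  have h1 : ∫ ω in s, g ω ∂μ = ∫ ω in s, (μ[g|m]) ω ∂μ := (setIntegral_condExp hm hg hsm).symm
  have h2 : ∫ ω in s, (μ[g|m]) ω ∂μ ≤ 0 := setIntegral_nonpos hs0 (fun ω hω => hω)
  have hμs : μ s = 0 := by
    by_contra hcon
    have hpos : 0 < μ (Function.support g ∩ s) := by
      have : Function.support g = Set.univ := by
        ext ω; simp [Function.support, (hgpos ω).ne']
      rw [this, Set.univ_inter]
      exact lt_of_le_of_ne (zero_le) (Ne.symm hcon)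
    have := (setIntegral_pos_iff_support_of_nonneg_ae
      (ae_of_all _ fun ω => (hgpos ω).le) (hg.integrableOn)).mpr hpos
    linarith [h1 ▸ this]
  rw [ae_iff]
  convert hμs using 2
  ext ω; simp [hs_def]

end Aux

lemma key_lemma {Ω : Type*} (mZX mX : MeasurableSpace Ω) [m0 : MeasurableSpace Ω]
    (hmZX : mZX ≤ m0) (hmXZX : mX ≤ mZX)
    (Q : Measure Ω) [IsProbabilityMeasure Q]
    (F P₁ P₂ : Ω → ℝ) (c : ℝ) (hc : 0 < c)
    (hFm : Measurable F) (hP₁m : Measurable P₁) (hP₂m : Measurable[mZX] P₂)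
    (hP₁pos : ∀ ω, 0 < P₁ ω) (hP₂pos : ∀ ω, 0 < P₂ ω)
    {Cf C₁ C₂ : ℝ} (hCf : ∀ ω, |F ω| ≤ Cf) (hC₁ : ∀ ω, |P₁ ω| ≤ C₁) (hC₂ : ∀ ω, |P₂ ω| ≤ C₂)
    (hCI₁ : Q[P₁|mZX] =ᵐ[Q] Q[P₁|mX])
    (hCIg : Q[F * P₁|mZX] =ᵐ[Q] Q[F * P₁|mX])
    (Q' : Measure Ω) [IsProbabilityMeasure Q']
    (hQ' : Q' = Q.withDensity (fun ω => ENNReal.ofReal (P₁ ω * P₂ ω / c))) :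
    Q'[F|mZX] =ᵐ[Q'] Q'[F|mX] := by
  have hmX : mX ≤ m0 := hmXZX.trans hmZX
  have hP₂m0 : Measurable P₂ := hP₂m.mono hmZX le_rfl
  -- nonneg bounds
  set Cf' := |Cf| with hCf'_def
  set C₁' := |C₁| with hC₁'_def
  set C₂' := |C₂| with hC₂'_def
  have hCf' : ∀ ω, |F ω| ≤ Cf' := fun ω => (hCf ω).trans (le_abs_self _)
  have hC₁' : ∀ ω, |P₁ ω| ≤ C₁' := fun ω => (hC₁ ω).trans (le_abs_self _)
  have hC₂' : ∀ ω, |P₂ ω| ≤ C₂' := fun ω => (hC₂ ω).trans (le_abs_self _)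
  have hCf'0 : 0 ≤ Cf' := abs_nonneg _
  have hC₁'0 : 0 ≤ C₁' := abs_nonneg _
  have hC₂'0 : 0 ≤ C₂' := abs_nonneg _
  -- integrability under Q
  have hP₁int : Integrable P₁ Q := integrable_of_ae_bdd hP₁m.aestronglyMeasurable
    (ae_of_all _ hC₁')
  have hGb : ∀ ω, |(F * P₁) ω| ≤ Cf' * C₁' := by
    intro ω
    simp only [Pi.mul_apply, abs_mul]
    exact mul_le_mul (hCf' ω) (hC₁' ω) (abs_nonneg _) hCf'0
  have hGint : Integrable (F * P₁) Q := integrable_of_ae_bdd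
    (hFm.mul hP₁m).aestronglyMeasurable (ae_of_all _ hGb)
  -- N and D
  set N : Ω → ℝ := Q[F * P₁|mX] with hN_def
  set D : Ω → ℝ := Q[P₁|mX] with hD_def
  have hDpos : ∀ᵐ ω ∂Q, 0 < D ω := condexp_pos_of_pos hmX hP₁int hP₁pos
  have hNabs : ∀ᵐ ω ∂Q, |N ω| ≤ Cf' * D ω := by
    have h1 : F * P₁ ≤ᵐ[Q] Cf' • P₁ := ae_of_all _ fun ω => by
      simp only [Pi.mul_apply, Pi.smul_apply, smul_eq_mul]
      exact mul_le_mul_of_nonneg_right (le_of_abs_le (hCf' ω)) (hP₁pos ω).le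
    have h2 : (-Cf') • P₁ ≤ᵐ[Q] F * P₁ := ae_of_all _ fun ω => by
      simp only [Pi.mul_apply, Pi.smul_apply, smul_eq_mul]
      nlinarith [abs_le.mp (hCf' ω), (hP₁pos ω).le]
    have hsm : Q[Cf' • P₁|mX] =ᵐ[Q] Cf' • D := condExp_smul Cf' P₁ mX
    have hsm' : Q[(-Cf') • P₁|mX] =ᵐ[Q] (-Cf') • D := condExp_smul (-Cf') P₁ mX
    have hub := condExp_mono (m := mX) hGint (hP₁int.smul Cf') h1
    have hlb := condExp_mono (m := mX) (hP₁int.smul (-Cf')) hGint h2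
    filter_upwards [hub, hlb, hsm, hsm'] with ω hu hl hs hs'
    rw [abs_le]
    constructor
    · have := hl; rw [hs'] at this; simpa [neg_mul] using this
    · have := hu; rw [hs] at this; simpa using this
  -- the candidate
  set h : Ω → ℝ := fun ω => N ω / D ω with hh_def
  have hh_sm : StronglyMeasurable[mX] h :=
    (stronglyMeasurable_condExp.measurable.div
      stronglyMeasurable_condExp.measurable).stronglyMeasurable
  have hh_m0 : Measurable h := ((stronglyMeasurable_condExp.measurable.div
      stronglyMeasurable_condExp.measurable).mono hmX le_rfl)
  have hhb : ∀ᵐ ω ∂Q, |h ω| ≤ Cf' := by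
    filter_upwards [hDpos, hNabs] with ω hD hN
    rw [hh_def]
    simp only [abs_div, abs_of_pos hD]
    rw [div_le_iff₀ hD]
    exact hN
  have hhD : ∀ᵐ ω ∂Q, h ω * D ω = N ω := by
    filter_upwards [hDpos] with ω hD
    exact div_mul_cancel₀ _ hD.ne'
  -- the density
  set d : Ω → ℝ := fun ω => P₁ ω * P₂ ω / c with hd_def
  have hd_meas : Measurable d := (hP₁m.mul hP₂m0).div_const c
  have hd_nonneg : ∀ ω, 0 ≤ d ω := fun ω =>
    div_nonneg (mul_nonneg (hP₁pos ω).le (hP₂pos ω).le) hc.le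
  have hQ'2 : Q' = Q.withDensity (fun ω => ((d ω).toNNReal : ℝ≥0∞)) := hQ'
  have hac : Q' ≪ Q := hQ'2 ▸ withDensity_absolutelyContinuous Q _
  -- conversion of set integrals
  have hconv : ∀ (s : Set Ω), MeasurableSet s → ∀ (g : Ω → ℝ),
      ∫ ω in s, g ω ∂Q' = ∫ ω in s, d ω * g ω ∂Q := by
    intro s hs g
    rw [hQ'2, restrict_withDensity hs,
      integral_withDensity_eq_integral_smul (hd_meas.real_toNNReal) g]
    refine integral_congr_ae (ae_of_all _ fun ω => ?_)
    simp [NNReal.smul_def, Real.coe_toNNReal _ (hd_nonneg ω)]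
  -- core set-integral identity
  have hkey : ∀ s : Set Ω, MeasurableSet[mZX] s →
      ∫ ω in s, F ω ∂Q' = ∫ ω in s, h ω ∂Q' := by
    intro s hs
    have hs0 : MeasurableSet s := hmZX _ hs
    set W : Ω → ℝ := s.indicator (fun ω => P₂ ω / c) with hW_def
    have hW_mZX : Measurable[mZX] W := (hP₂m.div_const c).indicator hs
    have hW_sm : StronglyMeasurable[mZX] W := hW_mZX.stronglyMeasurable
    have hW_m0 : Measurable W := hW_mZX.mono hmZX le_rfl
    have hWb : ∀ ω, |W ω| ≤ C₂' / c := by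
      intro ω
      rw [hW_def]
      by_cases hω : ω ∈ s
      · rw [Set.indicator_of_mem hω, abs_div, abs_of_pos hc]
        exact by gcongr; exact hC₂' ω
      · rw [Set.indicator_of_notMem hω]
        simpa using div_nonneg hC₂'0 hc.le
    have hLHS : ∫ ω in s, F ω ∂Q' = ∫ ω, W ω * N ω ∂Q := by
      rw [hconv s hs0 F, ← integral_indicator hs0]
      have e1 : s.indicator (fun ω => d ω * F ω) = W * (F * P₁) := by
        funext ω
        by_cases hω : ω ∈ s
        · simp only [Set.indicator_of_mem hω, hW_def, Pi.mul_apply, hd_def]; ring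
        · simp [hW_def, Set.indicator_of_notMem hω]
      rw [e1]
      have hWG_int : Integrable (W * (F * P₁)) Q := integrable_of_ae_bdd
        (hW_m0.mul (hFm.mul hP₁m)).aestronglyMeasurable
        (ae_of_all _ fun ω => by
          simp only [Pi.mul_apply, abs_mul]
          exact mul_le_mul (hWb ω) (by simpa [abs_mul] using hGb ω)
            (by positivity) (div_nonneg hC₂'0 hc.le))
      rw [← integral_condExp hmZX (f := W * (F * P₁))]
      refine integral_congr_ae ?_
      exact (condExp_mul_of_stronglyMeasurable_left hW_sm hWG_int hGint).trans
        (Filter.EventuallyEq.mul Filter.EventuallyEq.rfl hCIg)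
    have hRHS : ∫ ω in s, h ω ∂Q' = ∫ ω, W ω * N ω ∂Q := by
      rw [hconv s hs0 h, ← integral_indicator hs0]
      have e2 : s.indicator (fun ω => d ω * h ω) = (W * h) * P₁ := by
        funext ω
        by_cases hω : ω ∈ s
        · simp only [Set.indicator_of_mem hω, hW_def, Pi.mul_apply, hd_def]; ring
        · simp [hW_def, Set.indicator_of_notMem hω]
      rw [e2]
      have hWh_sm : StronglyMeasurable[mZX] (W * h) := hW_sm.mul (hh_sm.mono hmXZX)
      have hint : Integrable ((W * h) * P₁) Q := by
        refine integrable_of_ae_bdd ((hW_m0.mul hh_m0).mul hP₁m).aestronglyMeasurable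
          (C := (C₂' / c * Cf') * C₁') ?_
        filter_upwards [hhb] with ω hω
        simp only [Pi.mul_apply, abs_mul]
        refine mul_le_mul (mul_le_mul (hWb ω) hω (abs_nonneg _) (div_nonneg hC₂'0 hc.le))
          (hC₁' ω) (abs_nonneg _) ?_
        exact mul_nonneg (div_nonneg hC₂'0 hc.le) hCf'0
      rw [← integral_condExp hmZX (f := (W * h) * P₁)]
      refine integral_congr_ae ?_
      refine (condExp_mul_of_stronglyMeasurable_left hWh_sm hint hP₁int).trans ?_
      have step1 : (W * h) * Q[P₁|mZX] =ᵐ[Q] (W * h) * D :=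
        Filter.EventuallyEq.mul Filter.EventuallyEq.rfl hCI₁
      refine step1.trans ?_
      filter_upwards [hhD] with ω hω
      simp only [Pi.mul_apply]
      rw [mul_assoc, hω]
    exact hLHS.trans hRHS.symm
  -- conclusion via uniqueness of conditional expectation
  have hFintQ' : Integrable F Q' :=
    integrable_of_ae_bdd hFm.aestronglyMeasurable (ae_of_all _ hCf')
  have hhbQ' : ∀ᵐ ω ∂Q', |h ω| ≤ Cf' := hac.ae_le hhb
  have hhintQ' : Integrable h Q' := integrable_of_ae_bdd hh_m0.aestronglyMeasurable hhbQ'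
  have e1 : h =ᵐ[Q'] Q'[F|mZX] :=
    ae_eq_condExp_of_forall_setIntegral_eq hmZX hFintQ'
      (fun s _ _ => hhintQ'.integrableOn)
      (fun s hs _ => (hkey s hs).symm)
      ((hh_sm.mono hmXZX).aestronglyMeasurable)
  have e2 : h =ᵐ[Q'] Q'[F|mX] :=
    ae_eq_condExp_of_forall_setIntegral_eq hmX hFintQ'
      (fun s _ _ => hhintQ'.integrableOn)
      (fun s hs _ => (hkey s (hmXZX s hs)).symm)
      (hh_sm.aestronglyMeasurable)
  exact e1.symm.trans e2

/-- If `U ⊥ Z | X` under `Q` and `Q' ≪ Q` has a density that factorizes as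
`ψ₁(U,X)·ψ₂(Z,X)/c` with `ψ₁, ψ₂` bounded, positive and measurable and `c > 0`, then
`U ⊥ Z | X` under `Q'` (conditional independence stated via conditional expectations of
bounded functions `f(U,X)`). -/
theorem stmt2 {Ω α β γ : Type*} [MeasurableSpace Ω] [MeasurableSpace α]
    [MeasurableSpace β] [MeasurableSpace γ]
    (Q : Measure Ω) [IsProbabilityMeasure Q]
    (U : Ω → α) (Z : Ω → β) (X : Ω → γ)
    (hU : Measurable U) (hZ : Measurable Z) (hX : Measurable X)
    (hCI : ∀ f : α × γ → ℝ, Measurable f → (∃ C, ∀ p, |f p| ≤ C) →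
      Q[fun ω => f (U ω, X ω) | MeasurableSpace.comap (fun ω => (Z ω, X ω)) inferInstance]
        =ᵐ[Q] Q[fun ω => f (U ω, X ω) | MeasurableSpace.comap X inferInstance])
    (ψ₁ : α × γ → ℝ) (ψ₂ : β × γ → ℝ) (c : ℝ)
    (hψ₁m : Measurable ψ₁) (hψ₂m : Measurable ψ₂)
    (hψ₁pos : ∀ p, 0 < ψ₁ p) (hψ₂pos : ∀ p, 0 < ψ₂ p)
    (hψ₁b : ∃ C, ∀ p, |ψ₁ p| ≤ C) (hψ₂b : ∃ C, ∀ p, |ψ₂ p| ≤ C)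
    (hc : 0 < c)
    (Q' : Measure Ω) [IsProbabilityMeasure Q']
    (hQ' : Q' = Q.withDensity
      (fun ω => ENNReal.ofReal (ψ₁ (U ω, X ω) * ψ₂ (Z ω, X ω) / c))) :
    ∀ f : α × γ → ℝ, Measurable f → (∃ C, ∀ p, |f p| ≤ C) →
      Q'[fun ω => f (U ω, X ω) | MeasurableSpace.comap (fun ω => (Z ω, X ω)) inferInstance]
        =ᵐ[Q'] Q'[fun ω => f (U ω, X ω) | MeasurableSpace.comap X inferInstance] := by
  intro f hf hfb
  obtain ⟨Cf, hCf⟩ := hfb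
  obtain ⟨C₁, hC₁⟩ := hψ₁b
  obtain ⟨C₂, hC₂⟩ := hψ₂b
  have hpairm : Measurable (fun ω => (Z ω, X ω)) := hZ.prodMk hX
  have hmZX : MeasurableSpace.comap (fun ω => (Z ω, X ω)) inferInstance ≤ _ := hpairm.comap_le
  have hmXZX : MeasurableSpace.comap X inferInstance ≤
      MeasurableSpace.comap (fun ω => (Z ω, X ω)) inferInstance := by
    rintro s ⟨A, hA, rfl⟩
    refine ⟨Set.univ ×ˢ A, MeasurableSet.univ.prod hA, ?_⟩
    ext ω; simp
  have hpair_mZX : Measurable[MeasurableSpace.comap (fun ω => (Z ω, X ω)) inferInstance]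
      (fun ω => (Z ω, X ω)) := measurable_iff_comap_le.mpr le_rfl
  refine key_lemma _ _ hmZX hmXZX Q (fun ω => f (U ω, X ω)) (fun ω => ψ₁ (U ω, X ω))
    (fun ω => ψ₂ (Z ω, X ω)) c hc
    (hf.comp (hU.prodMk hX)) (hψ₁m.comp (hU.prodMk hX)) (hψ₂m.comp hpair_mZX)
    (fun ω => hψ₁pos _) (fun ω => hψ₂pos _)
    (fun ω => hCf _) (fun ω => hC₁ _) (fun ω => hC₂ _)
    (hCI ψ₁ hψ₁m ⟨C₁, hC₁⟩) ?_ Q' hQ'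
  have := hCI (fun p => f p * ψ₁ p) (hf.mul hψ₁m)
    ⟨|Cf| * |C₁|, fun p => by
      rw [abs_mul]
      exact mul_le_mul ((hCf p).trans (le_abs_self _)) ((hC₁ p).trans (le_abs_self _))
        (abs_nonneg _) (abs_nonneg _)⟩
  exact this
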